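/- Let μ, γ, φ, β, Cs, Ci, Cr be positive real numbers with Ci > Cs, let g(s,i,r) = Cs·Ci/(s·Cs + i·Ci + r·Cr), and consider the planar functions g₁(i,r) = g(1-i-r, i, r)·β·i·(1-i-r) + φ·r·i - (γ+μ)·i and g₂(i,r) = γ·i - φ·r·i - μ·r on the open region Ω = {(i,r) : i > 0, r > 0, i + r < 1}. Then at every point of Ω, ∂/∂i (g₁(i,r)/(i·r)) + ∂/∂r (g₂(i,r)/(i·r)) = (∂g/∂i - ∂g/∂s)(1-i-r, i, r)·β·(1-i-r)/r - β·g(1-i-r, i, r)/r - γ/r², and this quantity is strictly negative. -/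

import Mathlib

set_option maxHeartbeats 1600000


/-- Dulac criterion computation for the planar reduction of the rescaled SIR
model with nonlinear relapse: on the region `{i > 0, r > 0, i + r < 1}`, with
`Ci > Cs`, the divergence of the vector field `(g₁, g₂)` weighted by the Dulac
function `1/(i·r)` equals
`(∂g/∂i - ∂g/∂s)(1-i-r,i,r)·β·(1-i-r)/r - β·g(1-i-r,i,r)/r - γ/r²`,
and this quantity is strictly negative. -/
theorem dulac_divergence_neg
    (μ γ φ β Cs Ci Cr : ℝ)
    (hμ : 0 < μ) (hγ : 0 < γ) (hφ : 0 < φ) (hβ : 0 < β)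
    (hCs : 0 < Cs) (hCi : 0 < Ci) (hCr : 0 < Cr) (hC : Ci > Cs)
    (g : ℝ → ℝ → ℝ → ℝ)
    (hg : g = fun s i r => Cs * Ci / (s * Cs + i * Ci + r * Cr))
    (g₁ g₂ : ℝ → ℝ → ℝ)
    (hg₁ : g₁ = fun i r =>
      g (1 - i - r) i r * β * i * (1 - i - r) + φ * r * i - (γ + μ) * i)
    (hg₂ : g₂ = fun i r => γ * i - φ * r * i - μ * r)
    (i r : ℝ) (hi : 0 < i) (hr : 0 < r) (hir : i + r < 1) :
    deriv (fun i' => g₁ i' r / (i' * r)) i +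
        deriv (fun r' => g₂ i r' / (i * r')) r
      = (deriv (fun x => g (1 - i - r) x r) i -
          deriv (fun x => g x i r) (1 - i - r)) * β * ((1 - i - r) / r)
        - β * g (1 - i - r) i r / r - γ / r ^ 2 ∧
    deriv (fun i' => g₁ i' r / (i' * r)) i +
        deriv (fun r' => g₂ i r' / (i * r')) r < 0 := by
  subst hg hg₁ hg₂
  have hs0 : 0 < 1 - i - r := by linarith
  have hCC : 0 < Ci - Cs := sub_pos.mpr hC
  have hD0 : 0 < (1 - i - r) * Cs + i * Ci + r * Cr := by
    nlinarith [mul_pos hs0 hCs, mul_pos hi hCi, mul_pos hr hCr]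
  -- first summand: simplify by cancelling i'
  have hfe : (fun i' : ℝ =>
      ((fun i r => Cs * Ci / ((1 - i - r) * Cs + i * Ci + r * Cr) * β * i * (1 - i - r)
        + φ * r * i - (γ + μ) * i) : ℝ → ℝ → ℝ) i' r / (i' * r))
      =ᶠ[nhds i] (fun i' : ℝ =>
        Cs * Ci / ((1 - i' - r) * Cs + i' * Ci + r * Cr) * β * (1 - i' - r) / r
          + (φ - (γ + μ) / r)) := by
    have hcont : ContinuousAt (fun x : ℝ => (1 - x - r) * Cs + x * Ci + r * Cr) i := by
      fun_prop
    filter_upwards [eventually_ne_nhds hi.ne', hcont.eventually_ne hD0.ne'] with x hx hDx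
    field_simp
    ring
  have h1 : HasDerivAt (fun i' : ℝ => 1 - i' - r) (-1) i := by
    simpa using (((hasDerivAt_id i).const_sub 1).sub_const r)
  have hA : HasDerivAt (fun i' : ℝ => (1 - i' - r) * Cs + i' * Ci + r * Cr)
      (Ci - Cs) i := by
    have := ((h1.mul_const Cs).add ((hasDerivAt_id i).mul_const Ci)).add_const (r * Cr)
    exact this.congr_deriv (by ring)
  have hAg : HasDerivAt (fun i' : ℝ => Cs * Ci / ((1 - i' - r) * Cs + i' * Ci + r * Cr))
      ((0 * ((1 - i - r) * Cs + i * Ci + r * Cr) - Cs * Ci * (Ci - Cs))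
        / ((1 - i - r) * Cs + i * Ci + r * Cr) ^ 2) i :=
    (hasDerivAt_const i (Cs * Ci)).div hA hD0.ne'
  have hft : HasDerivAt (fun i' : ℝ =>
      Cs * Ci / ((1 - i' - r) * Cs + i' * Ci + r * Cr) * β * (1 - i' - r) / r
        + (φ - (γ + μ) / r))
      ((((0 * ((1 - i - r) * Cs + i * Ci + r * Cr) - Cs * Ci * (Ci - Cs))
          / ((1 - i - r) * Cs + i * Ci + r * Cr) ^ 2) * β * (1 - i - r)
        + Cs * Ci / ((1 - i - r) * Cs + i * Ci + r * Cr) * β * (-1)) / r) i :=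
    (((hAg.mul_const β).mul h1).div_const r).add_const (φ - (γ + μ) / r)
  -- second summand: simplify by cancelling r'
  have hhe : (fun r' : ℝ =>
      ((fun i r => γ * i - φ * r * i - μ * r) : ℝ → ℝ → ℝ) i r' / (i * r'))
      =ᶠ[nhds r] (fun r' : ℝ => γ / r' - (φ + μ / i)) := by
    filter_upwards [eventually_ne_nhds hr.ne'] with x hx
    field_simp
    ring
  have hht : HasDerivAt (fun r' : ℝ => γ / r' - (φ + μ / i))
      ((0 * r - γ * 1) / r ^ 2) r :=
    ((hasDerivAt_const r γ).div (hasDerivAt_id r) hr.ne').sub_const (φ + μ / i)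
  have hval : deriv (fun i' =>
        ((fun i r => Cs * Ci / ((1 - i - r) * Cs + i * Ci + r * Cr) * β * i * (1 - i - r)
          + φ * r * i - (γ + μ) * i) : ℝ → ℝ → ℝ) i' r / (i' * r)) i +
      deriv (fun r' => ((fun i r => γ * i - φ * r * i - μ * r) : ℝ → ℝ → ℝ) i r' / (i * r')) r
      = -(Cs * Ci * (Ci - Cs)) / ((1 - i - r) * Cs + i * Ci + r * Cr) ^ 2 * β
          * ((1 - i - r) / r)
        - β * (Cs * Ci / ((1 - i - r) * Cs + i * Ci + r * Cr)) / r - γ / r ^ 2 := by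
    rw [hfe.deriv_eq, hhe.deriv_eq, hft.deriv, hht.deriv]
    field_simp
    ring
  -- right-hand side derivatives
  have hInner1 : HasDerivAt (fun x : ℝ => (1 - i - r) * Cs + x * Ci + r * Cr) Ci i := by
    have := (((hasDerivAt_id i).mul_const Ci).const_add ((1 - i - r) * Cs)).add_const (r * Cr)
    exact this.congr_deriv (by ring)
  have hR1 : HasDerivAt (fun x : ℝ => Cs * Ci / ((1 - i - r) * Cs + x * Ci + r * Cr))
      ((0 * ((1 - i - r) * Cs + i * Ci + r * Cr) - Cs * Ci * Ci)
        / ((1 - i - r) * Cs + i * Ci + r * Cr) ^ 2) i :=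
    (hasDerivAt_const i (Cs * Ci)).div hInner1 hD0.ne'
  have hInner2 : HasDerivAt (fun x : ℝ => x * Cs + i * Ci + r * Cr) Cs (1 - i - r) := by
    have := (((hasDerivAt_id (1 - i - r)).mul_const Cs).add_const (i * Ci)).add_const (r * Cr)
    exact this.congr_deriv (by ring)
  have hR2 : HasDerivAt (fun x : ℝ => Cs * Ci / (x * Cs + i * Ci + r * Cr))
      ((0 * ((1 - i - r) * Cs + i * Ci + r * Cr) - Cs * Ci * Cs)
        / ((1 - i - r) * Cs + i * Ci + r * Cr) ^ 2) (1 - i - r) := by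
    refine (hasDerivAt_const _ (Cs * Ci)).div hInner2 ?_
    show (1 - i - r) * Cs + i * Ci + r * Cr ≠ 0
    exact hD0.ne'
  constructor
  · rw [hval, hR1.deriv, hR2.deriv]
    simp only []
    field_simp
    ring
  · rw [hval]
    have p1 : 0 < Cs * Ci * (Ci - Cs) / ((1 - i - r) * Cs + i * Ci + r * Cr) ^ 2 * β
        * ((1 - i - r) / r) := by
      have := mul_pos (mul_pos hCs hCi) hCC
      positivity
    have p2 : 0 < β * (Cs * Ci / ((1 - i - r) * Cs + i * Ci + r * Cr)) / r := by positivity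
    have p3 : 0 < γ / r ^ 2 := by positivity
    have heq : -(Cs * Ci * (Ci - Cs)) / ((1 - i - r) * Cs + i * Ci + r * Cr) ^ 2 * β
          * ((1 - i - r) / r)
        = -(Cs * Ci * (Ci - Cs) / ((1 - i - r) * Cs + i * Ci + r * Cr) ^ 2 * β
          * ((1 - i - r) / r)) := by ring
    rw [heq]
    linarith
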